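/- Let N, D : (0, ε) → ℝ be continuously differentiable with N(t) < 0, D(t) > 0 on (0,ε), N(t) → 0, D(t) → 0 as t → 0⁺, N' bounded on (0, ε), and limsup_{t→0⁺} (−N(t)/D(t)) = +∞. Then there exists a sequence tᵢ → 0⁺ with D'(tᵢ) → 0. -/

import Mathlib

open Set Filter

theorem stmt_19 (ε : ℝ) (hε : 0 < ε) (N D : ℝ → ℝ) (B : ℝ)
    (hN : ContDiffOn ℝ 1 N (Ioo 0 ε)) (hD : ContDiffOn ℝ 1 D (Ioo 0 ε))
    (hNneg : ∀ t ∈ Ioo 0 ε, N t < 0) (hDpos : ∀ t ∈ Ioo 0 ε, 0 < D t)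
    (hN0 : Tendsto N (nhdsWithin 0 (Ioi 0)) (nhds 0))
    (hD0 : Tendsto D (nhdsWithin 0 (Ioi 0)) (nhds 0))
    (hN'bdd : ∀ t ∈ Ioo 0 ε, |deriv N t| ≤ B)
    (hlimsup : limsup (fun t => ((-N t / D t : ℝ) : EReal)) (nhdsWithin 0 (Ioi 0)) = ⊤) :
    ∃ t : ℕ → ℝ, (∀ i, t i ∈ Ioo 0 ε) ∧
      Tendsto t atTop (nhdsWithin 0 (Ioi 0)) ∧
      Tendsto (fun i => deriv D (t i)) atTop (nhds 0) := by
  have hB0 : 0 ≤ B :=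
    le_trans (abs_nonneg _) (hN'bdd (ε/2) ⟨by linarith, by linarith⟩)
  -- N differentiable at points of the open interval
  have hNd : DifferentiableOn ℝ N (Ioo 0 ε) := hN.differentiableOn one_ne_zero
  have hDd : DifferentiableOn ℝ D (Ioo 0 ε) := hD.differentiableOn one_ne_zero
  have hopen : IsOpen (Ioo (0:ℝ) ε) := isOpen_Ioo
  -- MVT bound : |N u| ≤ B * u on the interval
  have hNbound : ∀ u ∈ Ioo (0:ℝ) ε, -N u ≤ B * u := by
    intro u hu
    have hstep : ∀ s ∈ Ioo (0:ℝ) ε, |N u - N s| ≤ B * |u - s| := by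
      intro s hs
      have := Convex.norm_image_sub_le_of_norm_hasDerivWithin_le (f := N)
        (f' := fun x => deriv N x) (s := Ioo (0:ℝ) ε)
        (fun x hx => ((hNd x hx).differentiableAt (hopen.mem_nhds hx)).hasDerivAt.hasDerivWithinAt)
        (fun x hx => by simpa [Real.norm_eq_abs] using hN'bdd x hx)
        (convex_Ioo _ _) hs hu
      simpa [Real.norm_eq_abs] using this
    have hev : ∀ᶠ s in nhdsWithin (0:ℝ) (Ioi 0), |N u| ≤ B * |u - s| + |N s| := by
      filter_upwards [Ioo_mem_nhdsGT_of_mem (show (0:ℝ) ∈ Ico (0:ℝ) ε from ⟨le_rfl, hε⟩)]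
        with s hs
      calc |N u| ≤ |N u - N s| + |N s| := by
            have := abs_sub_abs_le_abs_sub (N u) (N s); linarith [abs_add_le (N u - N s) (N s)]
        _ ≤ B * |u - s| + |N s| := by linarith [hstep s hs]
    have htend : Tendsto (fun s => B * |u - s| + |N s|) (nhdsWithin (0:ℝ) (Ioi 0))
        (nhds (B * u)) := by
      have h1 : Tendsto (fun s : ℝ => B * |u - s|) (nhds (0:ℝ)) (nhds (B * |u - 0|)) :=
        (continuous_const.mul (continuous_const.sub continuous_id).abs).tendsto 0
      have h2 : Tendsto (fun s => |N s|) (nhdsWithin (0:ℝ) (Ioi 0)) (nhds |(0:ℝ)|) := hN0.abs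
      have := (h1.mono_left nhdsWithin_le_nhds).add h2
      simpa [abs_of_pos hu.1] using this
    have habs : |N u| ≤ B * u := ge_of_tendsto htend hev
    have := neg_abs_le (N u)
    have := le_abs_self (N u)
    cases abs_cases (N u) with
    | inl h => linarith [h.1, habs]
    | inr h => linarith [h.1, habs]
  -- key pointwise construction
  have key : ∀ i : ℕ, ∃ c, c ∈ Ioo (0:ℝ) ε ∧ c < 1/(i+1) ∧
      |deriv D c| ≤ 2*(B+1)/(i+1) := by
    intro i
    set M : ℝ := (i : ℝ) + 1 with hMdef
    have hM : (0:ℝ) < M := by positivity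
    -- frequently -N/D ≥ M
    have hfreq : ∃ᶠ x in nhdsWithin (0:ℝ) (Ioi 0), (M:ℝ) ≤ -N x / D x := by
      by_contra hcon
      have hev : ∀ᶠ x in nhdsWithin (0:ℝ) (Ioi 0),
          ((-N x / D x : ℝ) : EReal) ≤ (M : EReal) := by
        have := (not_frequently.mp hcon)
        filter_upwards [this] with x hx
        exact_mod_cast le_of_lt (lt_of_not_ge hx)
      have hle : limsup (fun t => ((-N t / D t : ℝ) : EReal)) (nhdsWithin 0 (Ioi 0))
          ≤ (M : EReal) := limsup_le_of_le (by isBoundedDefault) hev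
      rw [hlimsup] at hle
      exact absurd (top_le_iff.mp hle) fun h => (EReal.coe_lt_top M).ne h
    have hmem : Ioo (0:ℝ) (min ε (1/M)) ∈ nhdsWithin (0:ℝ) (Ioi 0) :=
      Ioo_mem_nhdsGT_of_mem ⟨le_rfl, lt_min hε (by positivity)⟩
    obtain ⟨u, hu1, hu2⟩ :=
      (hfreq.and_eventually (eventually_of_mem hmem fun x hx => hx)).exists
    have huε : u ∈ Ioo (0:ℝ) ε := ⟨hu2.1, lt_of_lt_of_le hu2.2 (min_le_left _ _)⟩
    have huM : u < 1/M := lt_of_lt_of_le hu2.2 (min_le_right _ _)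
    have hu0 : 0 < u := hu2.1
    have hDu : 0 < D u := hDpos u huε
    have hDuM : M * D u ≤ B * u := by
      have h1 : M * D u ≤ -N u := (le_div_iff₀ hDu).mp hu1
      exact h1.trans (hNbound u huε)
    -- choose s near 0
    have hev2 : ∀ᶠ s in nhdsWithin (0:ℝ) (Ioi 0),
        D s < u/(2*M) ∧ s ∈ Ioo (0:ℝ) (u/2) := by
      refine (hD0.eventually (gt_mem_nhds (show (0:ℝ) < u/(2*M) by positivity))).and ?_
      exact eventually_of_mem (Ioo_mem_nhdsGT_of_mem ⟨le_rfl, by positivity⟩) fun x hx => hx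
    obtain ⟨s, hsD, hs0, hsu⟩ := hev2.exists
    have hsε : s ∈ Ioo (0:ℝ) ε := ⟨hs0, by linarith [huε.2]⟩
    have hDs : 0 < D s := hDpos s hsε
    have hsub : Icc s u ⊆ Ioo (0:ℝ) ε := fun x hx => ⟨lt_of_lt_of_le hs0 hx.1,
      lt_of_le_of_lt hx.2 huε.2⟩
    have hslt : s < u := by linarith
    obtain ⟨c, hc, hc'⟩ := exists_deriv_eq_slope D hslt
      (hD.continuousOn.mono hsub)
      (hDd.mono (fun x hx => hsub ⟨le_of_lt hx.1, le_of_lt hx.2⟩))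
    refine ⟨c, hsub ⟨le_of_lt hc.1, le_of_lt hc.2⟩, lt_trans hc.2 huM, ?_⟩
    rw [hc']
    have hd : 0 < u - s := by linarith
    have hd2 : u/2 ≤ u - s := by linarith
    have hDsM : D s * (2*M) ≤ u := by
      have := (lt_div_iff₀ (by positivity : (0:ℝ) < 2*M)).mp hsD
      nlinarith
    rw [abs_le]
    constructor
    · rw [← neg_div, div_le_div_iff₀ hM hd]
      nlinarith
    · rw [div_le_div_iff₀ hd hM]
      nlinarith
  choose t ht1 ht2 ht3 using key
  have htend0 : Tendsto t atTop (nhds 0) := by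
    refine squeeze_zero (fun n => le_of_lt (ht1 n).1) (fun n => le_of_lt (ht2 n)) ?_
    exact tendsto_one_div_add_atTop_nhds_zero_nat
  refine ⟨t, ht1, ?_, ?_⟩
  · exact tendsto_nhdsWithin_of_tendsto_nhds_of_eventually_within _ htend0
      (Eventually.of_forall fun i => (ht1 i).1)
  · have hg : Tendsto (fun i : ℕ => 2*(B+1)/((i:ℝ)+1)) atTop (nhds 0) := by
      have := tendsto_one_div_add_atTop_nhds_zero_nat.const_mul (2*(B+1))
      simpa [div_eq_mul_inv, mul_comm, mul_assoc, one_div] using this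
    exact squeeze_zero_norm (fun n => by simpa [Real.norm_eq_abs] using ht3 n) hg
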